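/- Let p₀ ≥ 0 and q > 2p₀ + 1 be real numbers, let r₀ ≥ 2 be a natural number, and let L : 𝓘 → ℝ be a family such that |L(α)| ≤ α!·(2ℕ)^{p₀α}·(r₀^{|α|³})! for every nonzero multiindex α (no condition on L(0)). Then, with s = r₀⁵, the family α ↦ L(α)² · α! · ((s^{|α|³})!)^{−1} · (2ℕ)^{−qα} is summable over 𝓘; in particular ∑_{α∈𝓘} L(α)²·α!·((s^{|α|³})!)^{−1}·(2ℕ)^{−qα} < ∞. -/

import Mathlib

abbrev MultiIndex : Type := ℕ →₀ ℕ

/-- `|α| = ∑ₙ αₙ` -/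
def msize (α : MultiIndex) : ℕ := α.sum fun _ k => k

/-- `α! = ∏ₙ (αₙ)!` -/
def mfact (α : MultiIndex) : ℕ := α.prod fun _ k => k.factorial

/-- `(2ℕ)^{cα} = ∏ₙ (2n)^{c·αₙ}`; the index `n : ℕ` stands for the position `n+1 ≥ 1`. -/
noncomputable def wt (c : ℝ) (α : MultiIndex) : ℝ :=
  α.prod fun n k => (2 * ((n : ℝ) + 1)) ^ (c * (k : ℝ))

open Finset in
lemma aux_summable {x : ℕ → ℝ} (hx0 : ∀ n, 0 ≤ x n) (hx : Summable x) :
    Summable (fun α : MultiIndex => (∏ n ∈ α.support, x n ^ α n) / (mfact α : ℝ)) := by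
  set G : (ℕ → ℕ) → Finset ℕ → ℝ :=
    fun f s => (∏ i ∈ s, x i ^ f i) / (∏ i ∈ s, (f i).factorial : ℕ) with hG
  have hGnonneg : ∀ f s, 0 ≤ G f s := fun f s => by
    apply div_nonneg (Finset.prod_nonneg fun i _ => pow_nonneg (hx0 i) _) (by positivity)
  apply summable_of_sum_le (c := Real.exp (∑' n, x n))
  · intro α
    exact div_nonneg (Finset.prod_nonneg fun i _ => pow_nonneg (hx0 i) _) (by positivity)
  · intro T
    set s : Finset ℕ := T.sup Finsupp.support with hs
    set M : ℕ := T.sup msize with hM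
    have hkey : ∀ α ∈ T, (∏ n ∈ α.support, x n ^ α n) / (mfact α : ℝ) = G (⇑α) s := by
      intro α hα
      have hsub : α.support ⊆ s := Finset.le_sup (f := Finsupp.support) hα
      have h1 : (∏ n ∈ α.support, x n ^ α n) = ∏ n ∈ s, x n ^ α n := by
        apply Finset.prod_subset hsub
        intro i _ hi
        rw [Finsupp.notMem_support_iff.mp hi, pow_zero]
      have h2 : (mfact α : ℕ) = ∏ n ∈ s, (α n).factorial := by
        rw [mfact, Finsupp.prod]
        apply Finset.prod_subset hsub
        intro i _ hi
        rw [Finsupp.notMem_support_iff.mp hi, Nat.factorial_zero]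
      rw [hG, h1, h2]
    rw [Finset.sum_congr rfl hkey]
    classical
    have himg : ∑ f ∈ T.image (fun α : MultiIndex => (⇑α : ℕ → ℕ)), G f s
        = ∑ α ∈ T, G (⇑α) s :=
      Finset.sum_image (fun α _ β _ h => Finsupp.ext (fun n => congrFun h n))
    rw [← himg]
    have hsubB : T.image (fun α : MultiIndex => ⇑α) ⊆
        (range (M + 1)).biUnion (fun m => piAntidiag s m) := by
      intro f hf
      simp only [Finset.mem_image] at hf
      obtain ⟨α, hα, rfl⟩ := hf
      rw [Finset.mem_biUnion]
      refine ⟨msize α, ?_, ?_⟩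
      · rw [Finset.mem_range]
        exact Nat.lt_succ_of_le (Finset.le_sup hα)
      · rw [mem_piAntidiag]
        constructor
        · rw [msize, Finsupp.sum]
          exact (Finset.sum_subset (Finset.le_sup (f := Finsupp.support) hα)
            (fun i _ hi => Finsupp.notMem_support_iff.mp hi)).symm
        · intro i hi
          exact Finset.le_sup (f := Finsupp.support) hα (Finsupp.mem_support_iff.mpr hi)
    calc ∑ f ∈ T.image (fun α : MultiIndex => ⇑α), G f s
        ≤ ∑ f ∈ (range (M + 1)).biUnion (fun m => piAntidiag s m), G f s :=
          Finset.sum_le_sum_of_subset_of_nonneg hsubB (fun f _ _ => hGnonneg f s)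
      _ = ∑ m ∈ range (M + 1), ∑ f ∈ piAntidiag s m, G f s := by
          rw [Finset.sum_biUnion]
          intro a _ b _ hab
          simp only [Finset.disjoint_left, mem_piAntidiag]
          rintro f ⟨h1, -⟩ ⟨h2, -⟩
          exact hab (h1 ▸ h2 ▸ rfl)
      _ = ∑ m ∈ range (M + 1), (∑ i ∈ s, x i) ^ m / m.factorial := by
          refine Finset.sum_congr rfl fun m _ => ?_
          rw [Finset.sum_pow_eq_sum_piAntidiag s x m, Finset.sum_div]
          refine Finset.sum_congr rfl fun f hf => ?_
          rw [mem_piAntidiag] at hf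
          have hspec := Nat.multinomial_spec s f
          rw [hf.1] at hspec
          rw [hG]
          have hne : ((∏ i ∈ s, (f i).factorial : ℕ) : ℝ) ≠ 0 := by positivity
          have hm : (m.factorial : ℝ) ≠ 0 := by positivity
          field_simp
          push_cast [← hspec]
          ring
      _ ≤ Real.exp (∑ i ∈ s, x i) :=
          Real.sum_le_exp_of_nonneg (Finset.sum_nonneg fun i _ => hx0 i) _
      _ ≤ Real.exp (∑' n, x n) :=
          Real.exp_le_exp.mpr (Summable.sum_le_tsum s (fun i _ => hx0 i) hx)

lemma wt_eq (c : ℝ) (α : MultiIndex) :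
    wt c α = ∏ n ∈ α.support, ((2 * ((n : ℝ) + 1)) ^ c) ^ α n := by
  rw [wt, Finsupp.prod]
  refine Finset.prod_congr rfl fun n _ => ?_
  rw [← Real.rpow_natCast ((2 * ((n : ℝ) + 1)) ^ c) (α n), ← Real.rpow_mul (by positivity)]

lemma wt_pos (c : ℝ) (α : MultiIndex) : 0 < wt c α := by
  rw [wt_eq]
  exact Finset.prod_pos fun n _ => pow_pos (Real.rpow_pos_of_pos (by positivity) c) _

lemma wt_mul_wt (a b : ℝ) (α : MultiIndex) : wt a α * wt b α = wt (a + b) α := by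
  rw [wt_eq, wt_eq, wt_eq, ← Finset.prod_mul_distrib]
  refine Finset.prod_congr rfl fun n _ => ?_
  rw [← mul_pow, ← Real.rpow_add (by positivity)]

lemma msize_pos (α : MultiIndex) (hα : α ≠ 0) : 1 ≤ msize α := by
  rw [Nat.one_le_iff_ne_zero]
  intro h
  apply hα
  ext n
  by_cases hn : n ∈ α.support
  · exact (Finset.sum_eq_zero_iff.mp h n hn)
  · simpa using Finsupp.notMem_support_iff.mp hn

lemma mfact_le (α : MultiIndex) : mfact α ≤ (msize α).factorial :=
  Nat.le_of_dvd (Nat.factorial_pos _)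
    (Nat.prod_factorial_dvd_factorial_sum α.support α)

lemma fact_mul_fact_le (a b : ℕ) : a.factorial * b.factorial ≤ (a + b).factorial :=
  Nat.le_of_dvd (Nat.factorial_pos _) (Nat.factorial_mul_factorial_dvd_factorial_add a b)

lemma nat_key (r₀ : ℕ) (hr₀ : 2 ≤ r₀) (α : MultiIndex) (hα : α ≠ 0) :
    (mfact α) ^ 4 * ((r₀ ^ (msize α) ^ 3).factorial) ^ 2 ≤
      ((r₀ ^ 5) ^ (msize α) ^ 3).factorial := by
  set m := msize α with hm
  have hm1 : 1 ≤ m := msize_pos α hα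
  set F := r₀ ^ m ^ 3 with hF
  have hF2 : 2 ≤ F := le_trans hr₀ (le_self_pow₀ (le_trans one_le_two hr₀) (by positivity))
  have h1 : (mfact α) ^ 4 * F.factorial ^ 2 ≤ (m.factorial) ^ 4 * F.factorial ^ 2 :=
    Nat.mul_le_mul_right _ (Nat.pow_le_pow_left (mfact_le α) 4)
  have h2 : (m.factorial) ^ 4 * F.factorial ^ 2 ≤ (4 * m).factorial * (2 * F).factorial := by
    have ha : m.factorial * m.factorial ≤ (2 * m).factorial := by
      simpa [two_mul] using fact_mul_fact_le m m
    have hb : (2 * m).factorial * (2 * m).factorial ≤ (4 * m).factorial := by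
      have := fact_mul_fact_le (2 * m) (2 * m)
      calc (2*m).factorial * (2*m).factorial ≤ (2*m + 2*m).factorial := this
        _ = (4*m).factorial := by ring_nf
    have hc : F.factorial * F.factorial ≤ (2 * F).factorial := by
      simpa [two_mul] using fact_mul_fact_le F F
    calc (m.factorial) ^ 4 * F.factorial ^ 2
        = (m.factorial * m.factorial) * (m.factorial * m.factorial) *
            (F.factorial * F.factorial) := by ring
      _ ≤ (2*m).factorial * (2*m).factorial * ((2*F).factorial) :=
          Nat.mul_le_mul (Nat.mul_le_mul ha ha) hc
      _ ≤ (4*m).factorial * (2*F).factorial := Nat.mul_le_mul_right _ hb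
  have h3 : (4 * m).factorial * (2 * F).factorial ≤ (4 * m + 2 * F).factorial :=
    fact_mul_fact_le _ _
  have hmF : m ≤ F := by
    have : m < 2 ^ m := Nat.lt_two_pow_self
    have h2m : (2:ℕ) ^ m ≤ 2 ^ m ^ 3 :=
      Nat.pow_le_pow_right (by norm_num) (Nat.le_self_pow (by norm_num) m)
    have h2r : (2:ℕ) ^ m ^ 3 ≤ r₀ ^ m ^ 3 := Nat.pow_le_pow_left hr₀ _
    omega
  have h6 : 6 ≤ F ^ 4 := le_trans (by norm_num) (Nat.pow_le_pow_left hF2 4)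
  have h4 : 4 * m + 2 * F ≤ F ^ 5 := by
    calc 4 * m + 2 * F ≤ 4 * F + 2 * F := by omega
      _ = 6 * F := by ring
      _ ≤ F ^ 4 * F := Nat.mul_le_mul_right F h6
      _ = F ^ 5 := by ring
  have h5 : (4 * m + 2 * F).factorial ≤ (F ^ 5).factorial := Nat.factorial_le h4
  have hFeq : F ^ 5 = (r₀ ^ 5) ^ m ^ 3 := by rw [hF, pow_right_comm]
  rw [← hFeq]
  exact le_trans h1 (le_trans h2 (le_trans h3 h5))

lemma mfact_pos (α : MultiIndex) : 0 < mfact α := by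
  rw [mfact, Finsupp.prod]
  exact Finset.prod_pos fun _ _ => Nat.factorial_pos _

theorem stmt_14 (p₀ q : ℝ) (hp₀ : 0 ≤ p₀) (hq : 2 * p₀ + 1 < q) (r₀ : ℕ) (hr₀ : 2 ≤ r₀)
    (L : MultiIndex → ℝ)
    (hL : ∀ α : MultiIndex, α ≠ 0 →
      |L α| ≤ (mfact α : ℝ) * wt p₀ α * ((r₀ ^ (msize α) ^ 3).factorial : ℝ)) :
    Summable (fun α : MultiIndex =>
      (L α) ^ 2 * (mfact α : ℝ) * (((r₀ ^ 5) ^ (msize α) ^ 3).factorial : ℝ)⁻¹ *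
        wt (-q) α) := by
  set c : ℝ := 2 * p₀ - q with hc
  have hclt : c < -1 := by rw [hc]; linarith
  set x : ℕ → ℝ := fun n => (2 * ((n : ℝ) + 1)) ^ c with hxdef
  have hx0 : ∀ n, 0 ≤ x n := fun n => (Real.rpow_pos_of_pos (by positivity) c).le
  have hxs : Summable x := by
    have h2 := (Real.summable_nat_rpow (p := c)).mpr hclt
    have h3 := (summable_nat_add_iff 1).mpr h2
    have h1 : Summable (fun n : ℕ => ((n : ℝ) + 1) ^ c) := by
      refine h3.congr fun n => ?_
      push_cast
      ring_nf
    refine Summable.of_nonneg_of_le hx0 (fun n => ?_) h1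
    refine Real.rpow_le_rpow_of_nonpos (by positivity) (by nlinarith [Nat.cast_nonneg (α := ℝ) n])
      (by linarith)
  have hgsum := aux_summable hx0 hxs
  have hδ : Summable (fun α : MultiIndex => if α = 0 then
      (L 0 ^ 2 * (mfact 0 : ℝ) * (((r₀ ^ 5) ^ (msize 0) ^ 3).factorial : ℝ)⁻¹ * wt (-q) 0)
      else 0) := by
    apply summable_of_ne_finset_zero (s := {0})
    intro α hα
    rw [if_neg (by simpa using hα)]
  apply Summable.of_nonneg_of_le _ _ (hgsum.add hδ)
  · intro α
    exact mul_nonneg (mul_nonneg (mul_nonneg (sq_nonneg _) (Nat.cast_nonneg _))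
      (inv_nonneg.mpr (Nat.cast_nonneg _))) (wt_pos _ α).le
  · intro α
    by_cases h0 : α = 0
    · subst h0
      rw [if_pos rfl]
      refine le_add_of_nonneg_left ?_
      exact div_nonneg (Finset.prod_nonneg fun n _ => pow_nonneg (hx0 n) _) (Nat.cast_nonneg _)
    · rw [if_neg h0, add_zero]
      set A : ℝ := (mfact α : ℝ) with hA
      set P : ℝ := wt p₀ α with hP
      set W : ℝ := wt (-q) α with hW
      set Ffac : ℝ := ((r₀ ^ (msize α) ^ 3).factorial : ℝ) with hFf
      set B : ℝ := (((r₀ ^ 5) ^ (msize α) ^ 3).factorial : ℝ) with hB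
      have hApos : (0:ℝ) < A := by rw [hA]; exact_mod_cast mfact_pos α
      have hBpos : (0:ℝ) < B := by positivity
      have hPpos := wt_pos p₀ α
      have hWpos := wt_pos (-q) α
      have hFpos : (0:ℝ) < Ffac := by positivity
      have hL2 : L α ^ 2 ≤ (A * P * Ffac) ^ 2 := by
        rw [← sq_abs (L α)]
        exact pow_le_pow_left₀ (abs_nonneg _) (hL α h0) 2
      have hkey : A ^ 4 * Ffac ^ 2 ≤ B := by
        rw [hA, hFf, hB]; exact_mod_cast nat_key r₀ hr₀ α h0
      have hwtc : P * P * W = wt c α := by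
        rw [hP, hW, wt_mul_wt, wt_mul_wt]
        norm_num [hc]
        ring_nf
      have hprod : (∏ n ∈ α.support, x n ^ α n) = wt c α := (wt_eq c α).symm
      calc L α ^ 2 * A * B⁻¹ * W
          ≤ (A * P * Ffac) ^ 2 * A * B⁻¹ * W := by
            exact mul_le_mul_of_nonneg_right (mul_le_mul_of_nonneg_right
              (mul_le_mul_of_nonneg_right hL2 hApos.le) (inv_nonneg.mpr hBpos.le)) hWpos.le
        _ = (A ^ 3 * Ffac ^ 2 / B) * (P * P * W) := by
            rw [div_eq_mul_inv]; ring
        _ ≤ A⁻¹ * (P * P * W) := by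
            refine mul_le_mul_of_nonneg_right ?_
              (mul_nonneg (mul_nonneg hPpos.le hPpos.le) hWpos.le)
            rw [inv_eq_one_div, div_le_div_iff₀ hBpos hApos, one_mul]
            calc A ^ 3 * Ffac ^ 2 * A = A ^ 4 * Ffac ^ 2 := by ring
              _ ≤ B := hkey
        _ = (∏ n ∈ α.support, x n ^ α n) / A := by
            rw [hwtc, ← hprod, inv_mul_eq_div]
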